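/- Let n = 25 and let S = (18)(4)(2)(1) be the sequence over Z/25 with x_1 = 18, x_2 = 4, x_3 = 2, x_4 = 1. Then S is a minimal zero-sum sequence with ind(S) = 1, and moreover t(x̄_2 x_4, 25) = t(x̄_1 x_3, 25) while t(x̄_2 x_1, 25) ≠ t(x̄_4 x_3, 25), where x̄ denotes the inverse of x in (Z/25)^*. -/
import Mathlib


open Finset

/-- The representative of `z : ZMod n` in `{1, ..., n}`. -/
def rep (n : ℕ) (z : ZMod n) : ℕ := if z = 0 then n else z.val

/-- `g` is a generator of the additive group `ZMod n`. -/
def IsAddGenerator (n : ℕ) (g : ZMod n) : Prop := AddSubgroup.zmultiples g = ⊤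

/-- `x` is a minimal zero-sum sequence of length 4 over `ZMod n`:
it is a zero-sum sequence, but no proper nontrivial subsequence of it has sum zero. -/
def IsMinZeroSum4 (n : ℕ) (x : Fin 4 → ZMod n) : Prop :=
  (∑ i, x i) = 0 ∧
    ∀ T : Finset (Fin 4), T ≠ ∅ → T ≠ Finset.univ → (∑ i ∈ T, x i) ≠ 0

/-- The `g`-norm `‖S‖_g = (y₁ + ⋯ + y₄)/n` where `S = (y₁ g)⋯(y₄ g)`, `1 ≤ yᵢ ≤ n`. -/
noncomputable def gNorm (n : ℕ) (g : ZMod n) (x : Fin 4 → ZMod n) : ℝ :=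
  (∑ i, (rep n (g⁻¹ * x i) : ℝ)) / n

/-- The index of the sequence `x`: the minimum of the `g`-norms over generators `g`. -/
noncomputable def seqIndex (n : ℕ) (x : Fin 4 → ZMod n) : ℝ :=
  sInf {r : ℝ | ∃ g : ZMod n, IsAddGenerator n g ∧ r = gNorm n g x}

/-- The classical Dedekind sum `s(h, k) = ∑_{r=1}^{k} (r/k)(hr/k − ⌊hr/k⌋ − 1/2)`. -/
def dedekindS (h : ℤ) (k : ℕ) : ℚ :=
  ∑ r ∈ Finset.Icc 1 k,
    (r : ℚ) / k * ((h : ℚ) * r / k - ⌊(h : ℚ) * r / k⌋ - 1 / 2)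

/-- The Dedekind-type sum `t(h, k) = ∑_{1 ≤ r ≤ k, gcd(r,k)=1} (r/k)(hr/k − ⌊hr/k⌋ − 1/2)`. -/
def dedekindT (h : ℤ) (k : ℕ) : ℚ :=
  ∑ r ∈ (Finset.Icc 1 k).filter (fun r => Nat.gcd r k = 1),
    (r : ℚ) / k * ((h : ℚ) * r / k - ⌊(h : ℚ) * r / k⌋ - 1 / 2)

-- auxiliary lemmas

lemma dedekindT25 (h : ℤ) (c : ℚ)
    (hc : ∑ r ∈ (Finset.Icc 1 25).filter (fun r => Nat.gcd r 25 = 1),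
      (r : ℚ) / 25 * ((h : ℚ) * r / 25 - ((h * r / 25 : ℤ) : ℚ) - 1 / 2) = c) :
    dedekindT h 25 = c := by
  rw [dedekindT, ← hc]
  refine Finset.sum_congr rfl fun r _ => ?_
  have : ⌊(h:ℚ) * (r:ℚ) / ((25:ℕ):ℚ)⌋ = h * (r:ℤ) / 25 := by
    rw [show (h:ℚ)*(r:ℚ) = ((h * (r:ℤ) : ℤ):ℚ) by push_cast; ring]
    exact_mod_cast Rat.floor_intCast_div_natCast (h*(r:ℤ)) 25
  rw [this]
  norm_num

lemma rep_cast (z : ZMod 25) : ((rep 25 z : ℕ) : ZMod 25) = z := by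
  rw [rep]
  split_ifs with h
  · rw [ZMod.natCast_self, h]
  · rw [ZMod.natCast_val, ZMod.cast_id]

lemma rep_pos (z : ZMod 25) : 1 ≤ rep 25 z := by
  rw [rep]
  split_ifs with h
  · norm_num
  · exact Nat.one_le_iff_ne_zero.2 fun hv => h ((ZMod.val_eq_zero z).1 hv)

lemma gNorm_ge (g : ZMod 25) : (1:ℝ) ≤ gNorm 25 g ![18, 4, 2, 1] := by
  rw [gNorm]
  rw [show (∑ i, (rep 25 (g⁻¹ * ![(18:ZMod 25), 4, 2, 1] i) : ℝ))
      = ((∑ i, rep 25 (g⁻¹ * ![(18:ZMod 25), 4, 2, 1] i) : ℕ) : ℝ) by push_cast; rfl]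
  set S : ℕ := ∑ i, rep 25 (g⁻¹ * ![(18:ZMod 25), 4, 2, 1] i) with hS
  have hdvd : 25 ∣ S := by
    have : ((S : ℕ) : ZMod 25) = 0 := by
      rw [hS]
      push_cast [rep_cast]
      rw [← Finset.mul_sum]
      rw [show (∑ i, ![(18:ZMod 25), 4, 2, 1] i) = 0 by decide]
      ring
    exact (ZMod.natCast_eq_zero_iff S 25).1 this
  have hpos : 0 < S := by
    rw [hS, Fin.sum_univ_four]
    have := rep_pos (g⁻¹ * ![(18:ZMod 25), 4, 2, 1] 0)
    omega
  have h25 : 25 ≤ S := Nat.le_of_dvd hpos hdvd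
  rw [le_div_iff₀ (by norm_num : (0:ℝ) < ((25:ℕ):ℝ))]
  have : (25:ℝ) ≤ (S:ℝ) := by exact_mod_cast h25
  push_cast
  linarith

lemma gen_one : IsAddGenerator 25 (1 : ZMod 25) := by
  rw [IsAddGenerator]
  ext z
  simp only [AddSubgroup.mem_top, iff_true, AddSubgroup.mem_zmultiples_iff]
  exact ⟨(z.val : ℤ), by push_cast [zsmul_eq_mul]; simp [ZMod.natCast_val, ZMod.cast_id]⟩

lemma gNorm_one : gNorm 25 (1 : ZMod 25) ![18, 4, 2, 1] = 1 := by
  have i1 : (1 : ZMod 25)⁻¹ = 1 := ZMod.inv_eq_of_mul_eq_one 25 1 1 (by decide)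
  simp only [gNorm, Fin.sum_univ_four, Matrix.cons_val_zero, Matrix.cons_val_one,
    Matrix.head_cons, Matrix.cons_val_two, Matrix.tail_cons, Matrix.cons_val_three, i1, one_mul]
  rw [show rep 25 (18:ZMod 25) = 18 from by decide, show rep 25 (4:ZMod 25) = 4 from by decide,
      show rep 25 (2:ZMod 25) = 2 from by decide, show rep 25 (1:ZMod 25) = 1 from by decide]
  norm_num

set_option maxHeartbeats 1600000 in
/-- For `n = 25` and `S = (18)(4)(2)(1)` over `ZMod 25`: `S` is a minimal zero-sum
sequence with `ind(S) = 1`; moreover `t(x̄₂x₄, 25) = t(x̄₁x₃, 25)` while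
`t(x̄₂x₁, 25) ≠ t(x̄₄x₃, 25)`. -/
theorem example_n25 :
    IsMinZeroSum4 25 ![18, 4, 2, 1] ∧
      seqIndex 25 ![18, 4, 2, 1] = 1 ∧
      dedekindT ((((4 : ZMod 25)⁻¹ * 1).val : ℤ)) 25 =
        dedekindT ((((18 : ZMod 25)⁻¹ * 2).val : ℤ)) 25 ∧
      dedekindT ((((4 : ZMod 25)⁻¹ * 18).val : ℤ)) 25 ≠
        dedekindT ((((1 : ZMod 25)⁻¹ * 2).val : ℤ)) 25 := by
  have i4 : (4 : ZMod 25)⁻¹ = 19 := ZMod.inv_eq_of_mul_eq_one 25 4 19 (by decide)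
  have i18 : (18 : ZMod 25)⁻¹ = 7 := ZMod.inv_eq_of_mul_eq_one 25 18 7 (by decide)
  have i1 : (1 : ZMod 25)⁻¹ = 1 := ZMod.inv_eq_of_mul_eq_one 25 1 1 (by decide)
  refine ⟨?_, ?_, ?_, ?_⟩
  · constructor
    · decide
    · decide
  · rw [seqIndex]
    have hmem : (1:ℝ) ∈ {r : ℝ | ∃ g : ZMod 25, IsAddGenerator 25 g ∧ r = gNorm 25 g ![18, 4, 2, 1]} :=
      ⟨1, gen_one, gNorm_one.symm⟩
    apply le_antisymm
    · exact csInf_le ⟨1, fun r ⟨g, _, hr⟩ => hr ▸ gNorm_ge g⟩ hmem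
    · exact le_csInf ⟨1, hmem⟩ fun r ⟨g, _, hr⟩ => hr ▸ gNorm_ge g
  · rw [i4, i18, show ((19:ZMod 25) * 1).val = 19 from by decide,
        show ((7:ZMod 25) * 2).val = 14 from by decide,
        show ((19:ℕ):ℤ) = (19:ℤ) from by norm_num,
        show ((14:ℕ):ℤ) = (14:ℤ) from by norm_num,
        dedekindT25 19 (9/25) (by norm_num [Finset.sum_filter, Finset.sum_Icc_succ_top]),
        dedekindT25 14 (9/25) (by norm_num [Finset.sum_filter, Finset.sum_Icc_succ_top])]
  · rw [i4, i1, show ((19:ZMod 25) * 18).val = 17 from by decide,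
        show ((1:ZMod 25) * 2).val = 2 from by decide,
        show ((17:ℕ):ℤ) = (17:ℤ) from by norm_num,
        show ((2:ℕ):ℤ) = (2:ℤ) from by norm_num,
        dedekindT25 17 (2/5) (by norm_num [Finset.sum_filter, Finset.sum_Icc_succ_top]),
        dedekindT25 2 (4/5) (by norm_num [Finset.sum_filter, Finset.sum_Icc_succ_top])]
    norm_num
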